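/- Under the same setup (X̃₁,X̃₂,X̃₃ with equal pairwise adjacent correlations ρ̃, Cov(X̃₁,X̃₃) = Cov(X̃₁,X̃₂)Cov(X̃₂,X̃₃)/Var(X̃₂), and X₂ = X̃₂ + E₂ with measurement error of relative standard deviation γ > 0), the partial correlation between X̃₁ and X̃₃ given X₂, defined as (ρ₁₃ − ρ₁₂ρ₂₃)/(√(1−ρ₁₂²)·√(1−ρ₂₃²)) where ρ₁₂, ρ₂₃, ρ₁₃ are the correlations among X̃₁, X₂, X̃₃, equals γ²ρ̃²/(1 + γ² − ρ̃²). -/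
import Mathlib


/-- with `ρ₁₂ = ρ₂₃ = ρ̃/√(1+γ²)` and `ρ₁₃ = ρ̃²`, the partial
correlation of variables 1 and 3 given the contaminated variable 2, defined as
`(ρ₁₃ − ρ₁₂ρ₂₃)/(√(1−ρ₁₂²)·√(1−ρ₂₃²))`, equals `γ²ρ̃²/(1 + γ² − ρ̃²)`. -/
theorem partial_corr_with_measurement_error
    (ρ γ : ℝ) (hρ : 0 < ρ ^ 2) (hρ1 : ρ ^ 2 < 1) (hγ : 0 < γ)
    (ρ12 ρ23 ρ13 : ℝ)
    (h12 : ρ12 = ρ / Real.sqrt (1 + γ ^ 2))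
    (h23 : ρ23 = ρ / Real.sqrt (1 + γ ^ 2))
    (h13 : ρ13 = ρ ^ 2) :
    (ρ13 - ρ12 * ρ23) / (Real.sqrt (1 - ρ12 ^ 2) * Real.sqrt (1 - ρ23 ^ 2))
      = γ ^ 2 * ρ ^ 2 / (1 + γ ^ 2 - ρ ^ 2) := by
  have hs : (0:ℝ) < 1 + γ ^ 2 := by positivity
  have hsq : Real.sqrt (1 + γ ^ 2) ^ 2 = 1 + γ ^ 2 := Real.sq_sqrt hs.le
  have h12sq : ρ12 ^ 2 = ρ ^ 2 / (1 + γ ^ 2) := by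
    rw [h12, div_pow, hsq]
  have hlt : ρ ^ 2 / (1 + γ ^ 2) < 1 := by
    rw [div_lt_one hs]; nlinarith
  have hnn : (0:ℝ) ≤ 1 - ρ ^ 2 / (1 + γ ^ 2) := by linarith
  have hden : Real.sqrt (1 - ρ12 ^ 2) * Real.sqrt (1 - ρ23 ^ 2)
      = 1 - ρ ^ 2 / (1 + γ ^ 2) := by
    rw [h23, ← h12, h12sq]; exact Real.mul_self_sqrt hnn
  rw [hden, h13, h12, h23, div_mul_div_comm, Real.mul_self_sqrt hs.le]
  have h1 : 1 + γ ^ 2 - ρ ^ 2 ≠ 0 := by nlinarith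
  field_simp
  ring
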